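/- Let F be a field, X a type (set of variables), and let r be a nonzero homogeneous element of degree d of the free associative algebra F⟨X⟩ (i.e., an F-linear combination of monomials of length d). If s is a homogeneous element of degree d of F⟨X⟩ lying in the two-sided ideal generated by r, then s = γ·r for some γ ∈ F. -/

import Mathlib

noncomputable section

namespace FAAux

variable (F : Type) [Field F] (X : Type)

/-- A monomial: product of generators along a word. -/
def mon (l : List X) : FreeAlgebra F X := (l.map (FreeAlgebra.ι F)).prod

lemma mon_mul (l₁ l₂ : List X) : mon F X l₁ * mon F X l₂ = mon F X (l₁ ++ l₂) := by
  simp [mon]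

lemma equiv_mon (l : List X) :
    (FreeAlgebra.equivMonoidAlgebraFreeMonoid : FreeAlgebra F X ≃ₐ[F] MonoidAlgebra F (FreeMonoid X)) (mon F X l) =
      MonoidAlgebra.single (FreeMonoid.ofList l) 1 := by
  induction l with
  | nil =>
      simp [mon, MonoidAlgebra.one_def]
  | cons x l ih =>
      have : mon F X (x :: l) = FreeAlgebra.ι F x * mon F X l := by simp [mon]
      rw [this, map_mul, ih]
      have hx : (FreeAlgebra.equivMonoidAlgebraFreeMonoid : FreeAlgebra F X ≃ₐ[F] MonoidAlgebra F (FreeMonoid X)) (FreeAlgebra.ι F x) =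
          MonoidAlgebra.single (FreeMonoid.of x) 1 := by
        simp [FreeAlgebra.equivMonoidAlgebraFreeMonoid]
      rw [hx, MonoidAlgebra.single_mul_single, one_mul]
      rfl

/-- Filtering words of length `d`, as a linear map. -/
def filt (d : ℕ) : MonoidAlgebra F (FreeMonoid X) →ₗ[F] MonoidAlgebra F (FreeMonoid X) where
  toFun f := MonoidAlgebra.ofCoeff (f.coeff.filter (fun w => (FreeMonoid.toList w).length = d))
  map_add' _ _ := by
    rw [MonoidAlgebra.coeff_add, Finsupp.filter_add, MonoidAlgebra.ofCoeff_add]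
  map_smul' _ _ := by
    rw [MonoidAlgebra.coeff_smul, Finsupp.filter_smul, MonoidAlgebra.ofCoeff_smul]; rfl

/-- Projection onto words of length `d`. -/
def proj (d : ℕ) : FreeAlgebra F X →ₗ[F] FreeAlgebra F X :=
  (FreeAlgebra.equivMonoidAlgebraFreeMonoid : FreeAlgebra F X ≃ₐ[F] MonoidAlgebra F (FreeMonoid X)).symm.toLinearMap ∘ₗ
    filt F X d ∘ₗ
    (FreeAlgebra.equivMonoidAlgebraFreeMonoid : FreeAlgebra F X ≃ₐ[F] MonoidAlgebra F (FreeMonoid X)).toLinearMap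

lemma proj_mon (d : ℕ) (l : List X) :
    proj F X d (mon F X l) = if l.length = d then mon F X l else 0 := by
  have h := equiv_mon F X l
  rw [proj]
  simp only [LinearMap.coe_comp, Function.comp_apply, AlgEquiv.toLinearMap_apply, h, filt,
    LinearMap.coe_mk, AddHom.coe_mk, MonoidAlgebra.coeff_single]
  by_cases hl : l.length = d
  · rw [Finsupp.filter_single_of_pos _ (by simpa using hl), if_pos hl]
    have := congrArg (FreeAlgebra.equivMonoidAlgebraFreeMonoid :
        FreeAlgebra F X ≃ₐ[F] MonoidAlgebra F (FreeMonoid X)).symm h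
    rw [AlgEquiv.symm_apply_apply] at this
    exact this.symm
  · rw [Finsupp.filter_single_of_neg _ (by simpa using hl), if_neg hl, MonoidAlgebra.ofCoeff_zero, map_zero]

lemma proj_eq_self {d : ℕ} {x : FreeAlgebra F X}
    (hx : x ∈ Submodule.span F
      {y | ∃ l : List X, l.length = d ∧ y = (l.map (FreeAlgebra.ι F)).prod}) :
    proj F X d x = x := by
  induction hx using Submodule.span_induction with
  | mem y hy =>
      obtain ⟨l, hl, rfl⟩ := hy
      have := proj_mon F X d l
      rw [if_pos hl] at this
      exact this
  | zero => simp
  | add y z _ _ hy hz => rw [map_add, hy, hz]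
  | smul c y _ hy => rw [map_smul, hy]

lemma proj_sandwich {d : ℕ} (l₁ l₂ : List X) {x : FreeAlgebra F X}
    (hx : x ∈ Submodule.span F
      {y | ∃ l : List X, l.length = d ∧ y = (l.map (FreeAlgebra.ι F)).prod}) :
    proj F X d (mon F X l₁ * x * mon F X l₂) =
      if l₁.length = 0 ∧ l₂.length = 0 then x else 0 := by
  induction hx using Submodule.span_induction with
  | mem y hy =>
      obtain ⟨l, hl, rfl⟩ := hy
      have hmm : mon F X l₁ * mon F X l * mon F X l₂ = mon F X (l₁ ++ l ++ l₂) := by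
        rw [mon_mul, mon_mul]
      rw [show (l.map (FreeAlgebra.ι F)).prod = mon F X l from rfl, hmm, proj_mon]
      by_cases hc : l₁.length = 0 ∧ l₂.length = 0
      · obtain ⟨h1, h2⟩ := hc
        rw [List.length_eq_zero_iff] at h1 h2
        subst h1; subst h2
        simp [hl]
      · rw [if_neg hc, if_neg]
        simp only [List.length_append, hl]
        intro hcon
        exact hc ⟨by omega, by omega⟩
  | zero =>
      rw [mul_zero, zero_mul, map_zero]
      by_cases hc : l₁.length = 0 ∧ l₂.length = 0 <;> simp [hc]
  | add y z _ _ hy hz =>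
      rw [mul_add, add_mul, map_add, hy, hz]
      by_cases hc : l₁.length = 0 ∧ l₂.length = 0
      · simp [hc]
      · simp only [if_neg hc, add_zero]
  | smul c y _ hy =>
      rw [mul_smul_comm, smul_mul_assoc, map_smul, hy]
      by_cases hc : l₁.length = 0 ∧ l₂.length = 0
      · simp [hc]
      · simp only [if_neg hc, smul_zero]

/-- Left multiplication preserves the span of sandwiches `mon l₁ * r * mon l₂`. -/
lemma left_mul_mem (r : FreeAlgebra F X) (a : FreeAlgebra F X) :
    ∀ x ∈ Submodule.span F {y | ∃ l₁ l₂ : List X, y = mon F X l₁ * r * mon F X l₂},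
      a * x ∈ Submodule.span F {y | ∃ l₁ l₂ : List X, y = mon F X l₁ * r * mon F X l₂} := by
  induction a using FreeAlgebra.induction with
  | grade0 c =>
      intro x hx
      rw [← Algebra.smul_def]
      exact Submodule.smul_mem _ c hx
  | grade1 y =>
      intro x hx
      induction hx using Submodule.span_induction with
      | mem z hz =>
          obtain ⟨l₁, l₂, rfl⟩ := hz
          refine Submodule.subset_span ⟨y :: l₁, l₂, ?_⟩
          rw [show mon F X (y :: l₁) = FreeAlgebra.ι F y * mon F X l₁ by simp [mon],
            mul_assoc, mul_assoc, mul_assoc]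
      | zero => rw [mul_zero]; exact zero_mem _
      | add u v _ _ hu hv => rw [mul_add]; exact add_mem hu hv
      | smul c u _ hu => rw [mul_smul_comm]; exact Submodule.smul_mem _ c hu
  | mul a b ha hb =>
      intro x hx
      rw [mul_assoc]
      exact ha _ (hb _ hx)
  | add a b ha hb =>
      intro x hx
      rw [add_mul]
      exact add_mem (ha _ hx) (hb _ hx)

/-- Right multiplication preserves the span of sandwiches `mon l₁ * r * mon l₂`. -/
lemma right_mul_mem (r : FreeAlgebra F X) (a : FreeAlgebra F X) :
    ∀ x ∈ Submodule.span F {y | ∃ l₁ l₂ : List X, y = mon F X l₁ * r * mon F X l₂},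
      x * a ∈ Submodule.span F {y | ∃ l₁ l₂ : List X, y = mon F X l₁ * r * mon F X l₂} := by
  induction a using FreeAlgebra.induction with
  | grade0 c =>
      intro x hx
      rw [← Algebra.commutes c x, ← Algebra.smul_def]
      exact Submodule.smul_mem _ c hx
  | grade1 y =>
      intro x hx
      induction hx using Submodule.span_induction with
      | mem z hz =>
          obtain ⟨l₁, l₂, rfl⟩ := hz
          refine Submodule.subset_span ⟨l₁, l₂ ++ [y], ?_⟩
          rw [show mon F X (l₂ ++ [y]) = mon F X l₂ * FreeAlgebra.ι F y by
            rw [← mon_mul]; simp [mon]]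
          rw [mul_assoc]
      | zero => rw [zero_mul]; exact zero_mem _
      | add u v _ _ hu hv => rw [add_mul]; exact add_mem hu hv
      | smul c u _ hu => rw [smul_mul_assoc]; exact Submodule.smul_mem _ c hu
  | mul a b ha hb =>
      intro x hx
      rw [← mul_assoc]
      exact hb _ (ha _ hx)
  | add a b ha hb =>
      intro x hx
      rw [mul_add]
      exact add_mem (ha _ hx) (hb _ hx)

end FAAux

end

/-- The homogeneous component of degree `d` of the free algebra `F⟨X⟩`: the `F`-linear span
of the monomials (products of `d` generators). -/
def homogeneousComponent (F : Type) [Field F] (X : Type) (d : ℕ) :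
    Submodule F (FreeAlgebra F X) :=
  Submodule.span F {x | ∃ l : List X, l.length = d ∧ x = (l.map (FreeAlgebra.ι F)).prod}

/-- If `r` is a nonzero homogeneous element of degree `d` of the free algebra `F⟨X⟩`, then
every homogeneous element `s` of degree `d` lying in the two-sided ideal generated by `r`
is a scalar multiple of `r`. -/
theorem homogeneous_mem_span_singleton
    (F : Type) [Field F] (X : Type) (d : ℕ) (r s : FreeAlgebra F X)
    (hr0 : r ≠ 0) (hr : r ∈ homogeneousComponent F X d)
    (hs : s ∈ homogeneousComponent F X d)
    (hmem : s ∈ TwoSidedIdeal.span ({r} : Set (FreeAlgebra F X))) :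
    ∃ γ : F, s = γ • r := by
  classical
  set M := Submodule.span F
    {y | ∃ l₁ l₂ : List X, y = FAAux.mon F X l₁ * r * FAAux.mon F X l₂} with hM
  -- the span `M` is a two-sided ideal containing `r`, hence contains `s`
  have hsM : s ∈ M := by
    have h := TwoSidedIdeal.mem_span_iff.mp hmem
      (TwoSidedIdeal.mk' (M : Set (FreeAlgebra F X))
        (zero_mem M)
        (fun hx hy => add_mem hx hy)
        (fun hx => neg_mem hx)
        (fun {a x} hx => FAAux.left_mul_mem F X r a x hx)
        (fun {x y} hx => FAAux.right_mul_mem F X r y x hx))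
      (by
        intro z hz
        rw [Set.mem_singleton_iff] at hz
        subst hz
        simp only [SetLike.mem_coe, TwoSidedIdeal.mem_mk']
        exact Submodule.subset_span ⟨[], [], by simp [FAAux.mon]⟩)
    rwa [TwoSidedIdeal.mem_mk'] at h
  -- project onto degree `d`
  have key : M ≤ Submodule.comap (FAAux.proj F X d) (Submodule.span F {r}) := by
    rw [hM]
    refine Submodule.span_le.mpr ?_
    rintro y ⟨l₁, l₂, rfl⟩
    simp only [SetLike.mem_coe, Submodule.mem_comap]
    rw [FAAux.proj_sandwich F X l₁ l₂ hr]
    split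
    · exact Submodule.subset_span rfl
    · exact zero_mem _
  have hps : FAAux.proj F X d s ∈ Submodule.span F {r} := key hsM
  rw [FAAux.proj_eq_self F X hs] at hps
  obtain ⟨γ, hγ⟩ := Submodule.mem_span_singleton.mp hps
  exact ⟨γ, hγ.symm⟩
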